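/- arXiv:1504.01242 — 2 statements merged into one kernel-verified Lean document; each statement's English description precedes it below -/
import Mathlib

section
/- Let C: f = 0 be a reduced plane curve of degree d ≥ 4 which is a free divisor. Then st(f) = 2d − 4 − mdr(f) = T − ct(f), where T = 3(d−2). -/
open MvPolynomial

noncomputable section

/-- The polynomial ring `S = ℂ[x,y,z]`. -/
abbrev S3 : Type := MvPolynomial (Fin 3) ℂ

/-- The Jacobian ideal of `f`, generated by the three partial derivatives. -/
def jacobianIdeal (f : S3) : Ideal S3 :=
  Ideal.span {pderiv 0 f, pderiv 1 f, pderiv 2 f}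

/-- The dimension `m(f)_k` of the degree `k` homogeneous component of the
Milnor algebra `M(f) = S/J_f`. -/
def milnorDim (f : S3) (k : ℕ) : ℕ :=
  Module.finrank ℂ (Submodule.map (Ideal.Quotient.mkₐ ℂ (jacobianIdeal f)).toLinearMap
    (homogeneousSubmodule (Fin 3) ℂ k))

/-- The `S`-linear map `(a,b,c) ↦ a f_x + b f_y + c f_z`. -/
def relMap (f : S3) : (Fin 3 → S3) →ₗ[S3] S3 where
  toFun ρ := ∑ i, ρ i * pderiv i f
  map_add' a b := by simp [add_mul, Finset.sum_add_distrib]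
  map_smul' c a := by simp [Finset.mul_sum, mul_assoc]

/-- The module `AR(f)` of all relations among the partial derivatives of `f`. -/
def AR (f : S3) : Submodule S3 (Fin 3 → S3) := LinearMap.ker (relMap f)

/-- The degree `m` graded piece `AR(f)_m`, as a `ℂ`-subspace of `S³`. -/
def ARgr (f : S3) (m : ℕ) : Submodule ℂ (Fin 3 → S3) :=
  (LinearMap.ker ((relMap f).restrictScalars ℂ)) ⊓
    Submodule.pi Set.univ (fun _ => homogeneousSubmodule (Fin 3) ℂ m)

/-- `ar(f)_m = dim_ℂ AR(f)_m`. -/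
def arDim (f : S3) (m : ℕ) : ℕ := Module.finrank ℂ (ARgr f m)

/-- A vector of polynomials is homogeneous of degree `m` if all components are. -/
def IsHomogVec (ρ : Fin 3 → S3) (m : ℕ) : Prop := ∀ i, (ρ i).IsHomogeneous m

/-- `C : f = 0` is a free divisor with exponents `d₁, d₂` if `AR(f)` is a free
`S`-module with a homogeneous basis in degrees `d₁` and `d₂`. -/
def IsFreeDivisorWith (f : S3) (d₁ d₂ : ℕ) : Prop :=
  ∃ b : Module.Basis (Fin 2) S3 (AR f),
    IsHomogVec (↑(b 0)) d₁ ∧ IsHomogVec (↑(b 1)) d₂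

/-- `C : f = 0` is a free divisor if `AR(f)` is a free graded `S`-module of rank two. -/
def IsFreeDivisor (f : S3) : Prop := ∃ d₁ d₂ : ℕ, IsFreeDivisorWith f d₁ d₂

/-- `binom(a, 2)` for an integer `a`, zero when `a < 2`. -/
def chooseTwo (a : ℤ) : ℤ := (a.toNat).choose 2

/-- The Hilbert function `m(f_s)_k` of the Milnor algebra of a smooth plane curve
of degree `d`. -/
def smoothMilnorDim (d : ℕ) (k : ℤ) : ℤ :=
  chooseTwo (k + 2) - 3 * chooseTwo (k - d + 3) + 3 * chooseTwo (k - 2 * d + 4)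
    - chooseTwo (k - 3 * d + 5)

/-- `m(f)_k` extended to integer indices by zero. -/
def milnorDimZ (f : S3) (k : ℤ) : ℤ := if k < 0 then 0 else milnorDim f k.toNat

/-- `ar(f)_m` extended to integer indices by zero. -/
def arDimZ (f : S3) (m : ℤ) : ℤ := if m < 0 then 0 else arDim f m.toNat

/-- The coincidence threshold `ct(f)`. -/
def ctf (f : S3) (d : ℕ) : ℕ :=
  sSup {q : ℕ | ∀ k ≤ q, (milnorDim f k : ℤ) = smoothMilnorDim d k}

/-- The stability threshold `st(f)`. -/
def stf (f : S3) (τ : ℕ) : ℕ := sInf {q : ℕ | ∀ k ≥ q, milnorDim f k = τ}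

/-- `mdr(f)`, the minimal degree of a syzygy. -/
def mdr (f : S3) : ℕ := sInf {q : ℕ | ARgr f q ≠ ⊥}

/-- The irrelevant maximal ideal `(x,y,z)`. -/
def maxIdeal3 : Ideal S3 := Ideal.span {X 0, X 1, X 2}

/-- The saturation `I_f` of the Jacobian ideal with respect to `(x,y,z)`. -/
def satJacobian (f : S3) : Ideal S3 := ⨆ n : ℕ, (jacobianIdeal f).colon ((maxIdeal3 ^ n : Ideal S3) : Set S3)

-- chooseTwo basics
lemma chooseTwo_of_le_one {a : ℤ} (h : a ≤ 1) : chooseTwo a = 0 := by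
  unfold chooseTwo
  have : a.toNat < 2 := by omega
  rw [Nat.choose_eq_zero_of_lt this]; rfl

lemma chooseTwo_natCast (n : ℕ) : chooseTwo (n : ℤ) = n.choose 2 := by
  unfold chooseTwo; rw [Int.toNat_natCast]

lemma chooseTwo_succ {a : ℤ} (h : 0 ≤ a) : chooseTwo (a + 1) = chooseTwo a + a := by
  unfold chooseTwo
  obtain ⟨n, rfl⟩ := Int.eq_ofNat_of_zero_le h
  have h1 : ((n : ℤ) + 1).toNat = n + 1 := by omega
  rw [h1, Int.toNat_natCast, Nat.choose_succ_succ]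
  push_cast
  have : n.choose 1 = n := Nat.choose_one_right n
  omega

lemma chooseTwo_succ' {a : ℤ} (h : a ≤ 0) : chooseTwo (a + 1) = chooseTwo a := by
  rw [chooseTwo_of_le_one (by omega), chooseTwo_of_le_one (by omega)]

-- the count of monomials of degree k in 3 variables
def Tset (k : ℕ) : Finset (Σ _ : ℕ, ℕ) := (Finset.range (k+1)).sigma (fun a => Finset.range (k+1-a))

lemma Tset_card (k : ℕ) : (Tset k).card = (k+2).choose 2 := by
  rw [Tset, Finset.card_sigma]
  simp only [Finset.card_range]
  have h1 : ∑ a ∈ Finset.range (k+1), (k+1-a) = ∑ a ∈ Finset.range (k+1), (a+1) := by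
    rw [← Finset.sum_range_reflect]
    apply Finset.sum_congr rfl
    intro i hi; simp at hi; omega
  rw [h1]
  have h2 : (∑ a ∈ Finset.range (k+2), a) * 2 = (k+2) * (k+1) := by
    rw [Finset.sum_range_id_mul_two]; rfl
  have h3 : ∑ a ∈ Finset.range (k+1), (a+1) = ∑ a ∈ Finset.range (k+2), a := by
    rw [Finset.sum_range_succ' (fun a => a) (k+1)]; simp
  have h4 : (k+2).choose 2 = (k+2)*(k+1)/2 := by
    rw [Nat.choose_two_right]; rfl
  omega

end

noncomputable section

lemma degree_fin3 (d : Fin 3 →₀ ℕ) : d.degree = d 0 + d 1 + d 2 := by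
  have h : d.degree = ∑ i : Fin 3, d i := by
    rw [Finsupp.degree]
    apply Finset.sum_subset (Finset.subset_univ _)
    intro i _ hi
    simpa [Finsupp.mem_support_iff] using hi
  rw [h, Fin.sum_univ_three]

def degEquiv (k : ℕ) : {d : Fin 3 →₀ ℕ // d.degree = k} ≃ ↥(Tset k) where
  toFun d := ⟨⟨d.1 0, d.1 1⟩, by
    have h := degree_fin3 d.1
    rw [d.2] at h
    simp only [Tset, Finset.mem_sigma, Finset.mem_range]
    omega⟩
  invFun p := ⟨Finsupp.equivFunOnFinite.symm ![p.1.1, p.1.2, k - p.1.1 - p.1.2], by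
    have hp := p.2
    simp only [Tset, Finset.mem_sigma, Finset.mem_range] at hp
    rw [degree_fin3]
    simp [Finsupp.coe_equivFunOnFinite_symm]
    omega⟩
  left_inv d := by
    ext i
    have h := degree_fin3 d.1
    rw [d.2] at h
    fin_cases i <;> simp [Finsupp.coe_equivFunOnFinite_symm] <;> omega
  right_inv p := by
    ext <;> simp [Finsupp.coe_equivFunOnFinite_symm]

instance degFintype (k : ℕ) : Fintype {d : Fin 3 →₀ ℕ // d.degree = k} :=
  Fintype.ofEquiv _ (degEquiv k).symm

lemma degCard (k : ℕ) : Fintype.card {d : Fin 3 →₀ ℕ // d.degree = k} = (k+2).choose 2 := by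
  rw [Fintype.card_congr (degEquiv k), Fintype.card_coe, Tset_card]

abbrev Sk (k : ℕ) : Submodule ℂ S3 := homogeneousSubmodule (Fin 3) ℂ k

def SkBasis (k : ℕ) : Module.Basis {d : Fin 3 →₀ ℕ // d.degree = k} ℂ ↥(Sk k) := by
  have h : Sk k = restrictSupport ℂ {d : Fin 3 →₀ ℕ | d.degree = k} :=
    homogeneousSubmodule_eq_finsupp_supported (Fin 3) ℂ k
  exact (basisRestrictSupport ℂ _).map (LinearEquiv.ofEq _ _ h.symm)

instance SkFD (k : ℕ) : FiniteDimensional ℂ ↥(Sk k) :=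
  Module.Basis.finiteDimensional_of_finite (SkBasis k)

lemma finrank_Sk (k : ℕ) : Module.finrank ℂ ↥(Sk k) = (k+2).choose 2 := by
  rw [Module.finrank_eq_card_basis (SkBasis k), degCard]

end

noncomputable section

lemma homogComp_mul {p : S3} {e : ℕ} (hp : p.IsHomogeneous e) (q : S3) (k : ℕ) :
    homogeneousComponent k (q * p) =
      (if e ≤ k then homogeneousComponent (k - e) q else 0) * p := by
  set N := q.totalDegree + 1 with hN
  have hq : q = ∑ j ∈ Finset.range N, homogeneousComponent j q := (sum_homogeneousComponent q).symm
  have step : homogeneousComponent k (q * p) =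
      ∑ j ∈ Finset.range N, homogeneousComponent k (homogeneousComponent j q * p) := by
    conv_lhs => rw [hq]
    rw [Finset.sum_mul, map_sum]
  have term : ∀ j, homogeneousComponent k (homogeneousComponent j q * p) =
      if k = j + e then homogeneousComponent j q * p else 0 := by
    intro j
    have hmem : homogeneousComponent j q * p ∈ homogeneousSubmodule (Fin 3) ℂ (j + e) :=
      (homogeneousComponent_isHomogeneous j q).mul hp
    exact homogeneousComponent_of_mem hmem
  rw [step]
  simp only [term]
  by_cases he : e ≤ k
  · have hcond : ∀ j, (k = j + e) ↔ (k - e = j) := by intro j; omega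
    simp only [hcond]
    rw [Finset.sum_ite_eq (Finset.range N) (k-e) (fun j => homogeneousComponent j q * p)]
    by_cases hr : k - e ∈ Finset.range N
    · rw [if_pos hr, if_pos he]
    · rw [if_neg hr, if_pos he]
      have : homogeneousComponent (k-e) q = 0 := by
        apply homogeneousComponent_eq_zero
        simp only [Finset.mem_range, hN] at hr
        omega
      rw [this, zero_mul]
  · rw [if_neg he, zero_mul]
    apply Finset.sum_eq_zero
    intro j _
    rw [if_neg (by omega)]

end


noncomputable section

lemma milnor_rank (f : S3) (k : ℕ) :
    milnorDim f k +
      Module.finrank ℂ ↥((jacobianIdeal f).restrictScalars ℂ ⊓ Sk k) = (k+2).choose 2 := by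
  set q := (Ideal.Quotient.mkₐ ℂ (jacobianIdeal f)).toLinearMap
  set ψ := q ∘ₗ (Sk k).subtype with hψ
  have hrange : LinearMap.range ψ = Submodule.map q (Sk k) := by
    rw [hψ, LinearMap.range_comp, Submodule.range_subtype]
  have hm : milnorDim f k = Module.finrank ℂ ↥(LinearMap.range ψ) := by
    rw [hrange]; rfl
  have hkerq : LinearMap.ker q = (jacobianIdeal f).restrictScalars ℂ := by
    ext x
    simp only [LinearMap.mem_ker, q, AlgHom.toLinearMap_apply, Ideal.Quotient.mkₐ_eq_mk,
      Submodule.restrictScalars_mem]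
    exact Ideal.Quotient.eq_zero_iff_mem
  have hker : LinearMap.ker ψ = Submodule.comap (Sk k).subtype
      ((jacobianIdeal f).restrictScalars ℂ ⊓ Sk k) := by
    rw [hψ, LinearMap.ker_comp, hkerq]
    ext x
    simp only [Submodule.mem_comap, Submodule.mem_inf]
    exact ⟨fun h => ⟨h, x.2⟩, fun h => h.1⟩
  have hkerrank : Module.finrank ℂ ↥(LinearMap.ker ψ) =
      Module.finrank ℂ ↥((jacobianIdeal f).restrictScalars ℂ ⊓ Sk k) := by
    rw [hker]
    exact LinearEquiv.finrank_eq (Submodule.comapSubtypeEquivOfLe inf_le_right)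
  have := LinearMap.finrank_range_add_finrank_ker ψ
  rw [hkerrank, ← hm] at this
  rw [this, finrank_Sk]

end

noncomputable section

lemma isHomog_pderiv {f : S3} {d : ℕ} (hf : f.IsHomogeneous d) (i : Fin 3) :
    (pderiv i f).IsHomogeneous (d-1) := by
  conv_lhs => rw [f.as_sum]
  rw [map_sum]
  apply MvPolynomial.IsHomogeneous.sum
  intro s hs
  rw [pderiv_monomial]
  by_cases hsi : s i = 0
  · rw [hsi]
    simp only [Nat.cast_zero, mul_zero, monomial_zero]
    exact isHomogeneous_zero _ _ _
  · apply isHomogeneous_monomial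
    have hdeg : s.degree = d := by
      have hc : coeff s f ≠ 0 := by rwa [MvPolynomial.mem_support_iff] at hs
      have := hf hc
      rw [Finsupp.degree_eq_weight_one]
      exact this
    have h0 := degree_fin3 s
    have h1 := degree_fin3 (s - Finsupp.single i 1)
    have happ : ∀ j : Fin 3, ((s - Finsupp.single i 1) : Fin 3 →₀ ℕ) j
        = s j - ((Finsupp.single i 1) : Fin 3 →₀ ℕ) j := fun j => Finsupp.tsub_apply _ _ _
    simp only [happ, Finsupp.single_apply] at h1
    fin_cases i <;> simp_all <;> omega

end

noncomputable section

lemma relMap_apply (f : S3) (ρ : Fin 3 → S3) : relMap f ρ = ∑ i, ρ i * pderiv i f := rfl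

lemma mem_span_jac {f : S3} {g : S3} (hg : g ∈ jacobianIdeal f) :
    ∃ a b c : S3, g = a * pderiv 0 f + b * pderiv 1 f + c * pderiv 2 f := by
  rw [jacobianIdeal, show ({pderiv 0 f, pderiv 1 f, pderiv 2 f} : Set S3)
      = insert (pderiv 0 f) (insert (pderiv 1 f) {pderiv 2 f}) from rfl] at hg
  rw [Ideal.mem_span_insert] at hg
  obtain ⟨a, z, hz, rfl⟩ := hg
  rw [Ideal.mem_span_insert] at hz
  obtain ⟨b, w, hw, rfl⟩ := hz
  rw [Ideal.mem_span_singleton'] at hw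
  obtain ⟨c, rfl⟩ := hw
  exact ⟨a, b, c, by ring⟩

/-- decomposition of a homogeneous element of the Jacobian ideal -/
lemma jac_homog_decomp {f : S3} {d : ℕ} (hf : f.IsHomogeneous d) {k : ℕ}
    {g : S3} (hg : g ∈ jacobianIdeal f) (hgh : g.IsHomogeneous k) :
    (¬ d - 1 ≤ k → g = 0) ∧ (d - 1 ≤ k →
      ∃ u : Fin 3 → S3, (∀ i, u i ∈ Sk (k - (d-1))) ∧
        g = ∑ i, u i * pderiv i f) := by
  obtain ⟨a, b, c, rfl⟩ := mem_span_jac hg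
  set g := a * pderiv 0 f + b * pderiv 1 f + c * pderiv 2 f with hgdef
  have hcomp : homogeneousComponent k g = g :=
    by rw [homogeneousComponent_of_mem hgh, if_pos rfl]
  have h0 := homogComp_mul (isHomog_pderiv hf 0) a k
  have h1 := homogComp_mul (isHomog_pderiv hf 1) b k
  have h2 := homogComp_mul (isHomog_pderiv hf 2) c k
  have hsum : homogeneousComponent k g =
      (if d - 1 ≤ k then homogeneousComponent (k - (d-1)) a else 0) * pderiv 0 f +
      (if d - 1 ≤ k then homogeneousComponent (k - (d-1)) b else 0) * pderiv 1 f +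
      (if d - 1 ≤ k then homogeneousComponent (k - (d-1)) c else 0) * pderiv 2 f := by
    rw [hgdef, map_add, map_add, h0, h1, h2]
  constructor
  · intro hle
    rw [← hcomp, hsum]
    simp only [if_neg hle]
    simp
  · intro hle
    refine ⟨![homogeneousComponent (k - (d-1)) a, homogeneousComponent (k - (d-1)) b,
      homogeneousComponent (k - (d-1)) c], ?_, ?_⟩
    · intro i; fin_cases i <;> exact homogeneousComponent_mem _ _
    · rw [← hcomp, hsum, Fin.sum_univ_three]
      simp only [if_pos hle]
      simp

end

noncomputable section

lemma jac_low {f : S3} {d : ℕ} (hf : f.IsHomogeneous d) {k : ℕ} (hk : k < d - 1) :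
    (jacobianIdeal f).restrictScalars ℂ ⊓ Sk k = ⊥ := by
  rw [eq_bot_iff]
  rintro g ⟨hg1, hg2⟩
  exact (jac_homog_decomp hf hg1 hg2).1 (by omega)

/-- the inclusion of the degree-m piece cubed -/
def incl3 (m : ℕ) : (Fin 3 → ↥(Sk m)) →ₗ[ℂ] (Fin 3 → S3) :=
  LinearMap.pi (fun i => (Sk m).subtype ∘ₗ LinearMap.proj i)

lemma incl3_apply (m : ℕ) (v : Fin 3 → ↥(Sk m)) (i : Fin 3) : incl3 m v i = ↑(v i) := rfl

lemma incl3_inj (m : ℕ) : Function.Injective (incl3 m) := by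
  intro x y h
  funext i
  have := congrFun h i
  exact Subtype.ext this

def theta (f : S3) (m : ℕ) : (Fin 3 → ↥(Sk m)) →ₗ[ℂ] S3 :=
  ((relMap f).restrictScalars ℂ) ∘ₗ incl3 m

lemma theta_ker (f : S3) (m : ℕ) :
    Submodule.map (incl3 m) (LinearMap.ker (theta f m)) = ARgr f m := by
  ext ρ
  constructor
  · rintro ⟨v, hv, rfl⟩
    exact ⟨hv, Submodule.mem_pi.mpr (fun i _ => (v i).2)⟩
  · rintro ⟨h1, h2⟩
    replace h2 := Submodule.mem_pi.mp h2
    refine ⟨fun i => ⟨ρ i, h2 i (Set.mem_univ i)⟩, ?_, by funext i; rfl⟩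
    have hι : incl3 m (fun i => (⟨ρ i, h2 i (Set.mem_univ i)⟩ : ↥(Sk m))) = ρ := by
      funext i; rfl
    show theta f m _ = 0
    rw [theta, LinearMap.comp_apply, hι]
    exact h1

lemma theta_range {f : S3} {d : ℕ} (hf : f.IsHomogeneous d) (hd : 1 ≤ d) (m : ℕ) :
    LinearMap.range (theta f m) =
      (jacobianIdeal f).restrictScalars ℂ ⊓ Sk (m + (d-1)) := by
  ext g
  constructor
  · rintro ⟨v, rfl⟩
    have happ : theta f m v = ∑ i, (↑(v i) : S3) * pderiv i f := by
      rw [theta, LinearMap.comp_apply]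
      exact relMap_apply f _
    rw [happ]
    constructor
    · apply Ideal.sum_mem
      intro i _
      apply Ideal.mul_mem_left
      apply Ideal.subset_span
      fin_cases i <;> simp
    · apply MvPolynomial.IsHomogeneous.sum
      intro i _
      exact ((v i).2 : (↑(v i) : S3).IsHomogeneous m).mul (isHomog_pderiv hf i)
  · rintro ⟨hg1, hg2⟩
    obtain ⟨u, hu, hgeq⟩ := (jac_homog_decomp hf hg1 hg2).2 (by omega)
    have hmk : m + (d-1) - (d-1) = m := by omega
    rw [hmk] at hu
    refine ⟨fun i => ⟨u i, hu i⟩, ?_⟩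
    have happ : theta f m (fun i => ⟨u i, hu i⟩) = ∑ i, u i * pderiv i f := by
      rw [theta, LinearMap.comp_apply]
      exact relMap_apply f _
    rw [happ, ← hgeq]

lemma jac_rank {f : S3} {d : ℕ} (hf : f.IsHomogeneous d) (hd : 1 ≤ d) (m : ℕ) :
    Module.finrank ℂ ↥((jacobianIdeal f).restrictScalars ℂ ⊓ Sk (m + (d-1)))
      + arDim f m = 3 * ((m+2).choose 2) := by
  have hrn := LinearMap.finrank_range_add_finrank_ker (theta f m)
  have hdom : Module.finrank ℂ (Fin 3 → ↥(Sk m)) = 3 * ((m+2).choose 2) := by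
    rw [Module.finrank_pi_fintype, Fin.sum_univ_three, finrank_Sk]
    ring
  have hker : Module.finrank ℂ ↥(LinearMap.ker (theta f m)) = arDim f m := by
    rw [arDim, ← theta_ker f m]
    exact (Submodule.equivMapOfInjective _ (incl3_inj m) _).finrank_eq
  rw [theta_range hf hd, hker, hdom] at hrn
  exact hrn

end

noncomputable section

def W (e m : ℕ) : Submodule ℂ S3 := if e ≤ m then Sk (m-e) else ⊥

instance WFD (e m : ℕ) : FiniteDimensional ℂ ↥(W e m) := by
  by_cases h : e ≤ m
  · rw [W, if_pos h]; infer_instance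
  · rw [W, if_neg h]; infer_instance

lemma finrank_W (e m : ℕ) : (Module.finrank ℂ ↥(W e m) : ℤ) = chooseTwo ((m:ℤ) - e + 2) := by
  by_cases h : e ≤ m
  · rw [W, if_pos h, finrank_Sk]
    have he : ((m:ℤ) - e + 2) = ((m - e + 2 : ℕ) : ℤ) := by push_cast; omega
    rw [he, chooseTwo_natCast]
  · rw [W, if_neg h, finrank_bot, chooseTwo_of_le_one (by omega)]
    rfl

lemma W_mul_homog {e m : ℕ} {u : S3} (hu : u ∈ W e m) {p : S3} (hp : p.IsHomogeneous e) :
    (u * p).IsHomogeneous m := by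
  by_cases h : e ≤ m
  · rw [W, if_pos h] at hu
    have := (hu : u.IsHomogeneous (m-e)).mul hp
    rwa [Nat.sub_add_cancel h] at this
  · rw [W, if_neg h, Submodule.mem_bot] at hu
    rw [hu, zero_mul]
    exact isHomogeneous_zero _ _ _

section FreeBasis
variable {f : S3} {d₁ d₂ : ℕ}

lemma ar_decomp (b : Module.Basis (Fin 2) S3 (AR f)) (h1 : IsHomogVec (↑(b 0)) d₁)
    (h2 : IsHomogVec (↑(b 1)) d₂) (m : ℕ) {ρ : Fin 3 → S3} (hρ : ρ ∈ ARgr f m) :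
    ∃ u ∈ W d₁ m, ∃ v ∈ W d₂ m,
      ρ = u • (↑(b 0) : Fin 3 → S3) + v • (↑(b 1) : Fin 3 → S3) := by
  obtain ⟨hk, hpi⟩ := hρ
  have hAR : ρ ∈ AR f := hk
  replace hpi := Submodule.mem_pi.mp hpi
  set x : ↥(AR f) := ⟨ρ, hAR⟩ with hx
  have hrep := b.sum_repr x
  rw [Fin.sum_univ_two] at hrep
  set c1 := b.repr x 0
  set c2 := b.repr x 1
  have hρeq : ρ = c1 • (↑(b 0) : Fin 3 → S3) + c2 • (↑(b 1) : Fin 3 → S3) := by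
    have hcoe : ((c1 • b 0 + c2 • b 1 : ↥(AR f)) : Fin 3 → S3) = ρ := congrArg Subtype.val hrep
    rw [Submodule.coe_add, SetLike.val_smul, SetLike.val_smul] at hcoe
    exact hcoe.symm
  set u : S3 := if d₁ ≤ m then homogeneousComponent (m - d₁) c1 else 0 with hu
  set v : S3 := if d₂ ≤ m then homogeneousComponent (m - d₂) c2 else 0 with hv
  refine ⟨u, ?_, v, ?_, ?_⟩
  · rw [hu]
    by_cases h : d₁ ≤ m
    · rw [if_pos h, W, if_pos h]; exact homogeneousComponent_mem _ _
    · rw [if_neg h]; exact Submodule.zero_mem _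
  · rw [hv]
    by_cases h : d₂ ≤ m
    · rw [if_pos h, W, if_pos h]; exact homogeneousComponent_mem _ _
    · rw [if_neg h]; exact Submodule.zero_mem _
  · funext i
    have hcomp : ρ i = homogeneousComponent m (ρ i) := by
      rw [homogeneousComponent_of_mem (hpi i (Set.mem_univ i)), if_pos rfl]
    have hri : ρ i = c1 * (↑(b 0) : Fin 3 → S3) i + c2 * (↑(b 1) : Fin 3 → S3) i := by
      rw [hρeq]; rfl
    show ρ i = u * (↑(b 0) : Fin 3 → S3) i + v * (↑(b 1) : Fin 3 → S3) i
    rw [hu, hv]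
    calc ρ i = homogeneousComponent m (ρ i) := hcomp
      _ = homogeneousComponent m (c1 * (↑(b 0) : Fin 3 → S3) i
            + c2 * (↑(b 1) : Fin 3 → S3) i) := by rw [← hri]
      _ = _ := by rw [map_add, homogComp_mul (h1 i), homogComp_mul (h2 i)]

def chiMap (b : Module.Basis (Fin 2) S3 (AR f)) (m : ℕ) :
    (↥(W d₁ m) × ↥(W d₂ m)) →ₗ[ℂ] (Fin 3 → S3) where
  toFun p := (p.1 : S3) • (↑(b 0) : Fin 3 → S3) + (p.2 : S3) • (↑(b 1) : Fin 3 → S3)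
  map_add' x y := by
    simp only [Submodule.coe_add, Prod.fst_add, Prod.snd_add, add_smul]
    abel
  map_smul' c x := by
    simp only [Prod.smul_fst, Prod.smul_snd, Submodule.coe_smul, RingHom.id_apply, smul_add,
      smul_assoc]

lemma chiMap_inj (b : Module.Basis (Fin 2) S3 (AR f)) (m : ℕ) :
    Function.Injective (chiMap (d₁ := d₁) (d₂ := d₂) b m) := by
  apply LinearMap.ker_eq_bot.mp
  rw [eq_bot_iff]
  rintro ⟨u, v⟩ h
  rw [LinearMap.mem_ker] at h
  have h0 : (u : S3) • (↑(b 0) : Fin 3 → S3) + (v : S3) • (↑(b 1) : Fin 3 → S3) = 0 := h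
  have h' : (u : S3) • (b 0) + (v : S3) • (b 1) = (0 : ↥(AR f)) := by
    apply Subtype.ext
    rw [Submodule.coe_add, SetLike.val_smul, SetLike.val_smul, Submodule.coe_zero]
    exact h0
  have hli := Fintype.linearIndependent_iff.mp b.linearIndependent
      (fun i => if i = 0 then (u : S3) else (v : S3))
      (by rw [Fin.sum_univ_two]
          show (if (0:Fin 2) = 0 then (u:S3) else (v:S3)) • b 0
            + (if (1:Fin 2) = 0 then (u:S3) else (v:S3)) • b 1 = 0
          rw [if_pos rfl, if_neg (by decide : ¬(1 : Fin 2) = 0)]; exact h')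
  have hu0 : (u : S3) = 0 := by
    have h2 : (if (0:Fin 2) = 0 then (u:S3) else (v:S3)) = 0 := hli 0
    rwa [if_pos rfl] at h2
  have hv0 : (v : S3) = 0 := by
    have h2 : (if (1:Fin 2) = 0 then (u:S3) else (v:S3)) = 0 := hli 1
    rwa [if_neg (by decide : ¬(1 : Fin 2) = 0)] at h2
  simp only [Submodule.mem_bot, Prod.mk_eq_zero]
  exact ⟨Subtype.ext hu0, Subtype.ext hv0⟩

lemma chiMap_range (b : Module.Basis (Fin 2) S3 (AR f)) (h1 : IsHomogVec (↑(b 0)) d₁)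
    (h2 : IsHomogVec (↑(b 1)) d₂) (m : ℕ) :
    LinearMap.range (chiMap (d₁ := d₁) (d₂ := d₂) b m) = ARgr f m := by
  ext ρ
  constructor
  · rintro ⟨⟨u, v⟩, rfl⟩
    have e0 : relMap f (↑(b 0) : Fin 3 → S3) = 0 := (b 0).2
    have e1 : relMap f (↑(b 1) : Fin 3 → S3) = 0 := (b 1).2
    constructor
    · refine LinearMap.mem_ker.mpr ?_
      show relMap f ((u : S3) • (↑(b 0) : Fin 3 → S3) + (v : S3) • (↑(b 1) : Fin 3 → S3)) = 0
      rw [map_add, LinearMap.map_smul, LinearMap.map_smul, e0, e1, smul_zero, smul_zero, add_zero]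
    · apply Submodule.mem_pi.mpr
      intro i _
      show ((u : S3) * (↑(b 0) : Fin 3 → S3) i + (v : S3) * (↑(b 1) : Fin 3 → S3) i)
          ∈ Sk m
      exact Submodule.add_mem _ (W_mul_homog u.2 (h1 i)) (W_mul_homog v.2 (h2 i))
  · intro hρ
    obtain ⟨u, hu, v, hv, rfl⟩ := ar_decomp b h1 h2 m hρ
    exact ⟨⟨⟨u, hu⟩, ⟨v, hv⟩⟩, rfl⟩

lemma ar_dim (b : Module.Basis (Fin 2) S3 (AR f)) (h1 : IsHomogVec (↑(b 0)) d₁)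
    (h2 : IsHomogVec (↑(b 1)) d₂) (m : ℕ) : (arDim f m : ℤ) =
    chooseTwo ((m:ℤ) - d₁ + 2) + chooseTwo ((m:ℤ) - d₂ + 2) := by
  have h : arDim f m = Module.finrank ℂ (↥(W d₁ m) × ↥(W d₂ m)) := by
    rw [arDim, ← chiMap_range b h1 h2 m]
    exact LinearMap.finrank_range_of_inj (chiMap_inj (d₁ := d₁) (d₂ := d₂) b m)
  rw [h, Module.finrank_prod]
  push_cast
  rw [← finrank_W d₁ m, ← finrank_W d₂ m]

lemma ARgr_bot (b : Module.Basis (Fin 2) S3 (AR f)) (h1 : IsHomogVec (↑(b 0)) d₁)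
    (h2 : IsHomogVec (↑(b 1)) d₂) {m : ℕ} (hm1 : m < d₁) (hm2 : m < d₂) :
    ARgr f m = ⊥ := by
  rw [eq_bot_iff]
  intro ρ hρ
  obtain ⟨u, hu, v, hv, rfl⟩ := ar_decomp b h1 h2 m hρ
  rw [W, if_neg (by omega), Submodule.mem_bot] at hu
  rw [W, if_neg (by omega), Submodule.mem_bot] at hv
  rw [hu, hv, Submodule.mem_bot, zero_smul, zero_smul, add_zero]

lemma bvec_mem (b : Module.Basis (Fin 2) S3 (AR f)) (j : Fin 2) {dj : ℕ}
    (hj : IsHomogVec (↑(b j)) dj) : (↑(b j) : Fin 3 → S3) ∈ ARgr f dj := by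
  constructor
  · exact LinearMap.mem_ker.mpr ((b j).2 : relMap f _ = 0)
  · exact Submodule.mem_pi.mpr (fun i _ => hj i)

lemma ARgr_ne_bot (b : Module.Basis (Fin 2) S3 (AR f)) (j : Fin 2) {dj : ℕ}
    (hj : IsHomogVec (↑(b j)) dj) : ARgr f dj ≠ ⊥ := by
  intro h
  have hmem := bvec_mem b j hj
  rw [h, Submodule.mem_bot] at hmem
  exact b.ne_zero j (Subtype.ext hmem)

lemma mdr_eq (b : Module.Basis (Fin 2) S3 (AR f)) (h1 : IsHomogVec (↑(b 0)) d₁)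
    (h2 : IsHomogVec (↑(b 1)) d₂) : mdr f = min d₁ d₂ := by
  have hmem : ARgr f (min d₁ d₂) ≠ ⊥ := by
    rcases le_total d₁ d₂ with h | h
    · rw [min_eq_left h]; exact ARgr_ne_bot b 0 h1
    · rw [min_eq_right h]; exact ARgr_ne_bot b 1 h2
  apply le_antisymm
  · exact Nat.sInf_le hmem
  · refine le_csInf ⟨_, hmem⟩ fun q hq => ?_
    by_contra hlt
    push_neg at hlt
    have hb : ARgr f q = ⊥ := ARgr_bot b h1 h2 (by omega) (by omega)
    exact hq hb

lemma milnor_formula {d : ℕ} (hf : f.IsHomogeneous d) (hd : 1 ≤ d)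
    (b : Module.Basis (Fin 2) S3 (AR f)) (h1 : IsHomogVec (↑(b 0)) d₁)
    (h2 : IsHomogVec (↑(b 1)) d₂) (k : ℕ) :
    (milnorDim f k : ℤ) = chooseTwo ((k:ℤ)+2) - 3 * chooseTwo ((k:ℤ)-d+3)
      + chooseTwo ((k:ℤ)-d+3-d₁) + chooseTwo ((k:ℤ)-d+3-d₂) := by
  have hmr := milnor_rank f k
  have hc2 : ((k+2:ℕ).choose 2 : ℤ) = chooseTwo ((k:ℤ)+2) := by
    rw [show ((k:ℤ)+2) = ((k+2:ℕ):ℤ) by push_cast; ring, chooseTwo_natCast]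
  by_cases hk : k < d - 1
  · have hbot := jac_low hf hk
    rw [hbot, finrank_bot, add_zero] at hmr
    rw [chooseTwo_of_le_one (a := (k:ℤ)-d+3) (by omega),
      chooseTwo_of_le_one (a := (k:ℤ)-d+3-(d₁:ℤ)) (by omega),
      chooseTwo_of_le_one (a := (k:ℤ)-d+3-(d₂:ℤ)) (by omega)]
    rw [hmr, hc2]
    ring
  · push_neg at hk
    set m := k - (d-1) with hm
    have hmk : m + (d-1) = k := by omega
    have hjr := jac_rank hf hd m
    rw [hmk] at hjr
    have har := ar_dim b h1 h2 m
    have hm2 : ((m:ℤ)+2) = (k:ℤ)-d+3 := by omega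
    have hm3 : ((m:ℤ)-d₁+2) = (k:ℤ)-d+3-d₁ := by omega
    have hm4 : ((m:ℤ)-d₂+2) = (k:ℤ)-d+3-d₂ := by omega
    rw [hm3, hm4] at har
    have hc3 : ((m+2:ℕ).choose 2 : ℤ) = chooseTwo ((k:ℤ)-d+3) := by
      rw [show ((k:ℤ)-d+3) = ((m+2:ℕ):ℤ) by push_cast; omega, chooseTwo_natCast]
    have hmrz : (milnorDim f k : ℤ)
        + (Module.finrank ℂ ↥((jacobianIdeal f).restrictScalars ℂ ⊓ Sk k) : ℤ)
        = chooseTwo ((k:ℤ)+2) := by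
      rw [← hc2]; exact_mod_cast congrArg (Nat.cast : ℕ → ℤ) hmr
    have hjrz : (Module.finrank ℂ ↥((jacobianIdeal f).restrictScalars ℂ ⊓ Sk k) : ℤ)
        + (arDim f m : ℤ) = 3 * chooseTwo ((k:ℤ)-d+3) := by
      rw [← hc3]; exact_mod_cast congrArg (Nat.cast : ℕ → ℤ) hjr
    linarith [hmrz, hjrz, har]

end FreeBasis

end

noncomputable section

lemma chooseTwo_nonneg (a : ℤ) : 0 ≤ chooseTwo a := Int.natCast_nonneg _

lemma chooseTwo_two : chooseTwo 2 = 1 := rfl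

lemma chooseTwo_succ_max (a : ℤ) : chooseTwo (a+1) = chooseTwo a + max a 0 := by
  rcases le_or_gt 0 a with h | h
  · rw [chooseTwo_succ h, max_eq_left h]
  · rw [chooseTwo_succ' (by omega), max_eq_right (by omega), add_zero]

theorem stmt2 (f : S3) (d : ℕ) (hd : 4 ≤ d) (hf : f.IsHomogeneous d) (hred : Squarefree f)
    (hfree : IsFreeDivisor f)
    (τ : ℕ) (hτ : ∃ N : ℕ, ∀ k ≥ N, milnorDim f k = τ) :
    (stf f τ : ℤ) = 2 * d - 4 - mdr f ∧ (stf f τ : ℤ) = 3 * ((d : ℤ) - 2) - ctf f d := by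
  obtain ⟨N, hN⟩ := hτ
  obtain ⟨d₁, d₂, b, h1, h2⟩ := hfree
  set e := min d₁ d₂ with hedef
  set E := max d₁ d₂ with hEdef
  have he : e ≤ E := min_le_max
  have hM : ∀ k : ℕ, (milnorDim f k : ℤ) = chooseTwo ((k:ℤ)+2) - 3*chooseTwo ((k:ℤ)-d+3)
      + chooseTwo ((k:ℤ)-d+3-e) + chooseTwo ((k:ℤ)-d+3-E) := by
    intro k
    rcases le_total d₁ d₂ with h | h
    · rw [hedef, hEdef, min_eq_left h, max_eq_right h]
      exact milnor_formula hf (by omega) b h1 h2 k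
    · rw [hedef, hEdef, min_eq_right h, max_eq_left h]
      have hform := milnor_formula hf (by omega) b h1 h2 k
      linarith [hform]
  have step : ∀ k : ℕ, (milnorDim f (k+1) : ℤ) = (milnorDim f k : ℤ)
      + max ((k:ℤ)+2) 0 - 3 * max ((k:ℤ)-d+3) 0
      + max ((k:ℤ)-d+3-e) 0 + max ((k:ℤ)-d+3-E) 0 := by
    intro k
    have A := hM k
    have B := hM (k+1)
    push_cast at B
    rw [show (k:ℤ)+1+2 = ((k:ℤ)+2)+1 by ring,
        show (k:ℤ)+1-(d:ℤ)+3 = ((k:ℤ)-d+3)+1 by ring] at B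
    rw [show (k:ℤ)-(d:ℤ)+3+1-(e:ℤ) = ((k:ℤ)-d+3-e)+1 by ring,
        show (k:ℤ)-(d:ℤ)+3+1-(E:ℤ) = ((k:ℤ)-d+3-E)+1 by ring] at B
    rw [chooseTwo_succ_max ((k:ℤ)+2), chooseTwo_succ_max ((k:ℤ)-d+3),
        chooseTwo_succ_max ((k:ℤ)-d+3-e), chooseTwo_succ_max ((k:ℤ)-d+3-E)] at B
    linarith [A, B]
  -- the sum of exponents is d - 1
  have hsum : e + E + 1 = d := by
    set K := N + d + e + E + 5 with hK
    have hNK := hN K (by omega)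
    have hNK1 := hN (K+1) (by omega)
    have hs := step K
    rw [max_eq_left (by omega : (0:ℤ) ≤ (K:ℤ)+2),
        max_eq_left (by omega : (0:ℤ) ≤ (K:ℤ)-d+3),
        max_eq_left (by omega : (0:ℤ) ≤ (K:ℤ)-d+3-e),
        max_eq_left (by omega : (0:ℤ) ≤ (K:ℤ)-d+3-E)] at hs
    omega
  have hE2 : 2 ≤ E := by omega
  -- stability from d+E-3 on
  have hstep0 : ∀ k : ℕ, d+E-3 ≤ k → milnorDim f (k+1) = milnorDim f k := by
    intro k hk
    have hs := step k
    rw [max_eq_left (by omega : (0:ℤ) ≤ (k:ℤ)+2),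
        max_eq_left (by omega : (0:ℤ) ≤ (k:ℤ)-d+3),
        max_eq_left (by omega : (0:ℤ) ≤ (k:ℤ)-d+3-e),
        max_eq_left (by omega : (0:ℤ) ≤ (k:ℤ)-d+3-E)] at hs
    omega
  have hconst : ∀ k, d+E-3 ≤ k → milnorDim f k = milnorDim f (d+E-3) := by
    intro k hk
    induction k, hk using Nat.le_induction with
    | base => rfl
    | succ n hn ih => rw [hstep0 n hn, ih]
  have hstable : ∀ k, d+E-3 ≤ k → milnorDim f k = τ := by
    have hv : milnorDim f (d+E-3) = τ := by
      have hA := hN (max N (d+E-3)) (le_max_left _ _)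
      have hB := hconst (max N (d+E-3)) (le_max_right _ _)
      omega
    intro k hk
    rw [hconst k hk, hv]
  -- strict jump at d+E-4
  have hne : milnorDim f (d+E-4) ≠ τ := by
    have hs := step (d+E-4)
    rw [max_eq_left (by omega : (0:ℤ) ≤ ((d+E-4:ℕ):ℤ)+2),
        max_eq_left (by omega : (0:ℤ) ≤ ((d+E-4:ℕ):ℤ)-d+3),
        max_eq_right (by omega : ((d+E-4:ℕ):ℤ)-d+3-E ≤ 0)] at hs
    have hsucc : (d+E-4) + 1 = d+E-3 := by omega
    rw [hsucc] at hs
    have hv := hstable (d+E-3) (le_refl _)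
    rcases eq_or_lt_of_le he with heq | hlt
    · rw [max_eq_right (by omega : ((d+E-4:ℕ):ℤ)-d+3-e ≤ 0)] at hs
      omega
    · rw [max_eq_left (by omega : (0:ℤ) ≤ ((d+E-4:ℕ):ℤ)-d+3-e)] at hs
      omega
  -- stf value
  have hstf : stf f τ = d+E-3 := by
    rw [stf]
    apply le_antisymm
    · exact Nat.sInf_le (fun k hk => hstable k hk)
    · refine le_csInf ⟨_, fun k hk => hstable k hk⟩ fun q hq => ?_
      by_contra hlt
      push_neg at hlt
      exact hne (hq (d+E-4) (by omega))
  -- mdr value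
  have hmdr : mdr f = e := mdr_eq b h1 h2
  -- ctf value
  have hctf : ctf f d = d+e-2 := by
    rw [ctf]
    have hmem : ∀ k : ℕ, k ≤ d+e-2 → (milnorDim f k : ℤ) = smoothMilnorDim d k := by
      intro k hk
      rw [hM k, smoothMilnorDim]
      rw [chooseTwo_of_le_one (a := (k:ℤ)-d+3-(e:ℤ)) (by omega),
          chooseTwo_of_le_one (a := (k:ℤ)-d+3-(E:ℤ)) (by omega),
          chooseTwo_of_le_one (a := (k:ℤ)-2*(d:ℤ)+4) (by omega),
          chooseTwo_of_le_one (a := (k:ℤ)-3*(d:ℤ)+5) (by omega)]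
      ring
    have hbound : ∀ q ∈ {q : ℕ | ∀ k ≤ q, (milnorDim f k : ℤ) = smoothMilnorDim d k},
        q ≤ d+e-2 := by
      intro q hq
      by_contra hgt
      push_neg at hgt
      have heq := hq (d+e-1) (by omega)
      rw [hM (d+e-1), smoothMilnorDim] at heq
      rw [show ((d+e-1:ℕ):ℤ)-(d:ℤ)+3-(e:ℤ) = 2 by omega] at heq
      rw [chooseTwo_two] at heq
      rw [chooseTwo_of_le_one (a := ((d+e-1:ℕ):ℤ)-2*(d:ℤ)+4) (by omega),
          chooseTwo_of_le_one (a := ((d+e-1:ℕ):ℤ)-3*(d:ℤ)+5) (by omega)] at heq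
      have hpos := chooseTwo_nonneg (((d+e-1:ℕ):ℤ)-(d:ℤ)+3-(E:ℤ))
      linarith [heq, hpos]
    apply le_antisymm
    · exact csSup_le ⟨_, fun k hk => hmem k hk⟩ hbound
    · exact le_csSup ⟨_, hbound⟩ (fun k hk => hmem k hk)
  constructor
  · rw [hstf, hmdr]
    omega
  · rw [hstf, hctf]
    omega

end
end

section
/- For every integer k ≥ 2, the homogeneous polynomial f = (y^{k−1}z + x^k)²·y − x^{2k+1} ∈ ℂ[x,y,z] of degree 2k+1 defines a free divisor C_{2k+1}: f = 0 with exponents d_1 = d_2 = k; that is, AR(f) is a free S-module admitting a homogeneous basis consisting of two relations of degree k. -/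
open MvPolynomial

noncomputable section

variable {R : Type*} [CommRing R] [IsDomain R] [UniqueFactorizationMonoid R]

lemma parallel_of_cross
    (F0 F1 F2 w0 w1 w2 : R) (hF2 : F2 ≠ 0)
    (hcop : ∀ q : R, Prime q → q ∣ F0 → q ∣ F1 → q ∣ F2 → False)
    (h02 : w0 * F2 = w2 * F0) (h12 : w1 * F2 = w2 * F1) :
    ∃ α : R, w0 = α * F0 ∧ w1 = α * F1 ∧ w2 = α * F2 := by
  classical
  letI : NormalizationMonoid R := UniqueFactorizationMonoid.normalizationMonoid.toNormalizationMonoid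
  letI : GCDMonoid R := UniqueFactorizationMonoid.toGCDMonoid R
  obtain ⟨a, b, hw2, hF2', hab⟩ := extract_gcd w2 F2
  set d := gcd w2 F2 with hd
  have hd0 : d ≠ 0 := fun h => hF2 (by rw [hF2', h, zero_mul])
  have hb0 : b ≠ 0 := fun h => hF2 (by rw [hF2', h, mul_zero])
  have key0 : w0 * b = a * F0 := by
    refine mul_left_cancel₀ hd0 ?_
    rw [hw2, hF2'] at h02
    linear_combination h02
  have key1 : w1 * b = a * F1 := by
    refine mul_left_cancel₀ hd0 ?_
    rw [hw2, hF2'] at h12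
    linear_combination h12
  have hbu : IsUnit b := by
    by_contra hnb
    obtain ⟨p, hpirr, hpb⟩ := WfDvdMonoid.exists_irreducible_factor hnb hb0
    have hp : Prime p := (UniqueFactorizationMonoid.irreducible_iff_prime).mp hpirr
    have hpa : ¬ p ∣ a := fun h => hp.not_unit (isUnit_of_dvd_unit (dvd_gcd h hpb) hab)
    have hpF2 : p ∣ F2 := hpb.trans ⟨d, by rw [hF2']; ring⟩
    have hpF0 : p ∣ F0 :=
      ((hp.dvd_mul.mp (key0 ▸ (hpb.mul_left w0))).resolve_left hpa)
    have hpF1 : p ∣ F1 :=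
      ((hp.dvd_mul.mp (key1 ▸ (hpb.mul_left w1))).resolve_left hpa)
    exact hcop p hp hpF0 hpF1 hpF2
  rcases hbu with ⟨bu, rfl⟩
  refine ⟨a * ↑bu⁻¹, ?_, ?_, ?_⟩
  · linear_combination (↑bu⁻¹ : R) * key0 - w0 * bu.inv_mul
  · linear_combination (↑bu⁻¹ : R) * key1 - w1 * bu.inv_mul
  · rw [hw2, hF2']
    linear_combination (-(d*a)) * bu.inv_mul

lemma keySpan (F0 F1 F2 u0 u1 u2 v0 v1 v2 r0 r1 r2 e : R)
    (he : IsUnit e) (hF0 : F0 ≠ 0) (hF1 : F1 ≠ 0) (hF2 : F2 ≠ 0)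
    (hcop : ∀ q : R, Prime q → q ∣ F0 → q ∣ F1 → q ∣ F2 → False)
    (hc0 : u1*v2 - u2*v1 = e*F0) (hc1 : u2*v0 - u0*v2 = e*F1) (hc2 : u0*v1 - u1*v0 = e*F2)
    (hr : r0*F0 + r1*F1 + r2*F2 = 0) :
    ∃ α β : R, r0 = α*u0 + β*v0 ∧ r1 = α*u1 + β*v1 ∧ r2 = α*u2 + β*v2 := by
  have he0 : e ≠ 0 := he.ne_zero
  have hvF : e * (v0*F0 + v1*F1 + v2*F2) = 0 := by
    linear_combination -(v0*hc0 + v1*hc1 + v2*hc2)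
  have huF : e * (u0*F0 + u1*F1 + u2*F2) = 0 := by
    linear_combination -(u0*hc0 + u1*hc1 + u2*hc2)
  obtain ⟨α, ha0, ha1, ha2⟩ := parallel_of_cross F0 F1 F2
      (r1*v2 - r2*v1) (r2*v0 - r0*v2) (r0*v1 - r1*v0) hF2 hcop
      (mul_left_cancel₀ he0 (by
        linear_combination (r1*v2 - r2*v1)*hc2 - (r0*v1 - r1*v0)*hc0
          + v1*r0*hc0 + v1*r1*hc1 + v1*r2*hc2 - e*v1*hr + 2*r1*hvF))
      (mul_left_cancel₀ he0 (by
        linear_combination (r2*v0 - r0*v2)*hc2 - (r0*v1 - r1*v0)*hc1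
          - v0*r0*hc0 - v0*r1*hc1 - v0*r2*hc2 + e*v0*hr - 2*r0*hvF))
  obtain ⟨β, hb0, hb1, hb2⟩ := parallel_of_cross F0 F1 F2
      (u1*r2 - u2*r1) (u2*r0 - u0*r2) (u0*r1 - u1*r0) hF2 hcop
      (mul_left_cancel₀ he0 (by
        linear_combination (u1*r2 - u2*r1)*hc2 - (u0*r1 - u1*r0)*hc0
          - u1*r0*hc0 - u1*r1*hc1 - u1*r2*hc2 + e*u1*hr - 2*r1*huF))
      (mul_left_cancel₀ he0 (by
        linear_combination (u2*r0 - u0*r2)*hc2 - (u0*r1 - u1*r0)*hc1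
          + u0*r0*hc0 + u0*r1*hc1 + u0*r2*hc2 - e*u0*hr + 2*r0*huF))
  have sv0 : (e*r1 - α*u1 - β*v1)*v2 - (e*r2 - α*u2 - β*v2)*v1 = 0 := by
    linear_combination e*ha0 - α*hc0
  have sv1 : (e*r2 - α*u2 - β*v2)*v0 - (e*r0 - α*u0 - β*v0)*v2 = 0 := by
    linear_combination e*ha1 - α*hc1
  have sv2 : (e*r0 - α*u0 - β*v0)*v1 - (e*r1 - α*u1 - β*v1)*v0 = 0 := by
    linear_combination e*ha2 - α*hc2
  have su0 : u1*(e*r2 - α*u2 - β*v2) - u2*(e*r1 - α*u1 - β*v1) = 0 := by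
    linear_combination e*hb0 - β*hc0
  have su1 : u2*(e*r0 - α*u0 - β*v0) - u0*(e*r2 - α*u2 - β*v2) = 0 := by
    linear_combination e*hb1 - β*hc1
  have su2 : u0*(e*r1 - α*u1 - β*v1) - u1*(e*r0 - α*u0 - β*v0) = 0 := by
    linear_combination e*hb2 - β*hc2
  have z0 : e * ((e*r0 - α*u0 - β*v0) * F0) = e * 0 := by
    linear_combination -(e*r0 - α*u0 - β*v0)*hc0 + u0*sv0 - v2*su2 - v1*su1
  have z1 : e * ((e*r1 - α*u1 - β*v1) * F1) = e * 0 := by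
    linear_combination -(e*r1 - α*u1 - β*v1)*hc1 + u1*sv1 - v0*su0 - v2*su2
  have z2 : e * ((e*r2 - α*u2 - β*v2) * F2) = e * 0 := by
    linear_combination -(e*r2 - α*u2 - β*v2)*hc2 + u2*sv2 - v1*su1 - v0*su0
  have hσ0 : e*r0 - α*u0 - β*v0 = 0 :=
    (mul_eq_zero.mp (mul_left_cancel₀ he0 z0)).resolve_right hF0
  have hσ1 : e*r1 - α*u1 - β*v1 = 0 :=
    (mul_eq_zero.mp (mul_left_cancel₀ he0 z1)).resolve_right hF1
  have hσ2 : e*r2 - α*u2 - β*v2 = 0 :=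
    (mul_eq_zero.mp (mul_left_cancel₀ he0 z2)).resolve_right hF2
  rcases he with ⟨eu, rfl⟩
  refine ⟨↑eu⁻¹ * α, ↑eu⁻¹ * β, ?_, ?_, ?_⟩
  · linear_combination (↑eu⁻¹ : R) * hσ0 - r0 * eu.inv_mul
  · linear_combination (↑eu⁻¹ : R) * hσ1 - r1 * eu.inv_mul
  · linear_combination (↑eu⁻¹ : R) * hσ2 - r2 * eu.inv_mul


-- prime of X 0
lemma primeX0 : Prime (X (0 : Fin 3) : S3) := by
  rw [← MulEquiv.prime_iff (finSuccEquiv ℂ 2).toMulEquiv]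
  have : (finSuccEquiv ℂ 2).toMulEquiv (X (0:Fin 3) : S3) = Polynomial.X := by
    simpa using finSuccEquiv_X_zero (R := ℂ) (n := 2)
  rw [this]
  exact Polynomial.prime_X

lemma homog0_natCast (m : ℕ) : ((m : S3)).IsHomogeneous 0 := by
  rw [← map_natCast (C : ℂ →+* S3) m]; exact isHomogeneous_C _ _

lemma homX (i : Fin 3) (n : ℕ) : ((X i : S3) ^ n).IsHomogeneous n := by
  simpa using (isHomogeneous_X ℂ i).pow n

lemma homCast {p : S3} {m n : ℕ} (h : p.IsHomogeneous m) (e : m = n) : p.IsHomogeneous n := e ▸ h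

-- eval-based non-divisibility
lemma not_X0_dvd_X1 : ¬ (X (0:Fin 3) : S3) ∣ X 1 := by
  intro h
  have := (eval (![0,1,1] : Fin 3 → ℂ)).map_dvd h
  simp at this

lemma not_X0_dvd_yz (j : ℕ) : ¬ (X (0:Fin 3) : S3) ∣ X 1 ^ (j+1) * X 2 := by
  intro h
  have := (eval (![0,1,1] : Fin 3 → ℂ)).map_dvd h
  simp at this

-- from q ∣ X 0, q not unit, get X 0 ∣ q
lemma X0_dvd_of_dvd {q : S3} (h : q ∣ X 0) (hq : ¬ IsUnit q) : (X (0:Fin 3) : S3) ∣ q := by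
  obtain ⟨c, hc⟩ := h
  rcases primeX0.irreducible.isUnit_or_isUnit hc with h' | h'
  · exact absurd h' hq
  · exact ⟨↑h'.unit⁻¹, by rw [hc, mul_assoc, h'.mul_val_inv, mul_one]⟩


def Gp (j : ℕ) : S3 := X 1 ^ (j+1) * X 2 + X 0 ^ (j+2)
def fp (j : ℕ) : S3 := (Gp j)^2 * X 1 - X 0 ^ (2*j+5)

lemma pd0 (j : ℕ) : pderiv 0 (fp j)
    = 2*((j:S3)+2) * (X 0^(j+1) * X 1) * Gp j - (2*(j:S3)+5) * X 0^(2*j+4) := by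
  have e1 : j + 2 - 1 = j + 1 := by omega
  have e2 : 2*j + 5 - 1 = 2*j + 4 := by omega
  have e3 : (2:ℕ) - 1 = 1 := by omega
  simp only [fp, Gp, map_sub, map_add, pderiv_mul, pderiv_pow, pderiv_X_self,
    pderiv_X_of_ne (show (1:Fin 3) ≠ 0 by decide), pderiv_X_of_ne (show (2:Fin 3) ≠ 0 by decide),
    e1, e2, e3, mul_zero, zero_mul, mul_one, add_zero, zero_add]
  push_cast
  ring

lemma pd1 (j : ℕ) : pderiv 1 (fp j)
    = 2*((j:S3)+1) * (X 1^(j+1) * X 2) * Gp j + (Gp j)^2 := by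
  have e1 : j + 2 - 1 = j + 1 := by omega
  have e4 : j + 1 - 1 = j := by omega
  have e3 : (2:ℕ) - 1 = 1 := by omega
  simp only [fp, Gp, map_sub, map_add, pderiv_mul, pderiv_pow, pderiv_X_self,
    pderiv_X_of_ne (show (0:Fin 3) ≠ 1 by decide), pderiv_X_of_ne (show (2:Fin 3) ≠ 1 by decide),
    e1, e4, e3, mul_zero, zero_mul, mul_one, add_zero, zero_add, sub_zero]
  push_cast
  ring

lemma pd2 (j : ℕ) : pderiv 2 (fp j) = 2 * X 1^(j+2) * Gp j := by
  have e3 : (2:ℕ) - 1 = 1 := by omega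
  simp only [fp, Gp, map_sub, map_add, pderiv_mul, pderiv_pow, pderiv_X_self,
    pderiv_X_of_ne (show (0:Fin 3) ≠ 2 by decide), pderiv_X_of_ne (show (1:Fin 3) ≠ 2 by decide),
    e3, mul_zero, zero_mul, mul_one, add_zero, zero_add, sub_zero]
  push_cast
  ring

lemma unit_natCast_S3 {m : ℕ} (hm : m ≠ 0) : IsUnit ((m : ℕ) : S3) := by
  rw [← map_natCast (C : ℂ →+* S3) m]
  exact (isUnit_iff_ne_zero.mpr (by exact_mod_cast Nat.cast_ne_zero.mpr hm)).map C

lemma unit_neg_two : IsUnit (-2 : S3) := by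
  have h : ((C (-2 : ℂ)) : S3) = -2 := by rw [map_neg, map_ofNat]
  exact h ▸ (isUnit_iff_ne_zero.mpr (by norm_num)).map C

lemma F0_ne (j : ℕ) : pderiv 0 (fp j) ≠ 0 := by
  rw [pd0]
  intro h
  have h2 := congrArg (eval (![1,0,0] : Fin 3 → ℂ)) h
  simp [Gp] at h2
  have : ((2*j+5 : ℕ) : ℂ) ≠ 0 := Nat.cast_ne_zero.mpr (by omega)
  push_cast at this
  exact this (by linear_combination -h2)

lemma F1_ne (j : ℕ) : pderiv 1 (fp j) ≠ 0 := by
  rw [pd1]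
  intro h
  have h2 := congrArg (eval (![1,0,0] : Fin 3 → ℂ)) h
  simp [Gp] at h2

lemma F2_ne (j : ℕ) : pderiv 2 (fp j) ≠ 0 := by
  rw [pd2]
  intro h
  have h2 := congrArg (eval (![0,1,1] : Fin 3 → ℂ)) h
  simp [Gp] at h2

lemma hcop (j : ℕ) : ∀ q : S3, Prime q →
    q ∣ pderiv 0 (fp j) → q ∣ pderiv 1 (fp j) → q ∣ pderiv 2 (fp j) → False := by
  intro q hq h0 _ h2
  rw [pd0] at h0
  rw [pd2] at h2
  have hqnu : ¬ IsUnit q := hq.not_unit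
  -- step: from q ∣ X 0 and q ∣ (X1-ish thing), contradiction
  have hu5 : IsUnit ((2*(j:S3)+5)) := by
    have : ((2*j+5 : ℕ) : S3) = 2*(j:S3)+5 := by push_cast; ring
    exact this ▸ unit_natCast_S3 (by omega)
  have hu2 : IsUnit (2 : S3) := by
    have : (((2:ℕ) : ℕ) : S3) = 2 := by push_cast; ring
    exact this ▸ unit_natCast_S3 (by omega)
  have hX0ofq : q ∣ (2*(j:S3)+5) * X 0^(2*j+4) → q ∣ X 0 := by
    intro h
    rcases hq.dvd_mul.mp h with h | h
    · exact absurd (isUnit_of_dvd_unit h hu5) hqnu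
    · exact hq.dvd_of_dvd_pow h
  rcases hq.dvd_mul.mp h2 with hA | hG
  · rcases hq.dvd_mul.mp hA with hA2 | hApow
    · exact absurd (isUnit_of_dvd_unit hA2 hu2) hqnu
    · -- q ∣ X 1
      have hq1 : q ∣ X 1 := hq.dvd_of_dvd_pow hApow
      have h5 : q ∣ (2*(j:S3)+5) * X 0^(2*j+4) := by
        have h' := dvd_sub (hq1.mul_left (2*((j:S3)+2) * (X 0^(j+1)) * Gp j))
          h0
        have e : 2*((j:S3)+2) * (X 0^(j+1)) * Gp j * X 1 -
            (2*((j:S3)+2) * (X 0^(j+1) * X 1) * Gp j - (2*(j:S3)+5) * X 0^(2*j+4))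
            = (2*(j:S3)+5) * X 0^(2*j+4) := by ring
        rwa [e] at h'
      have hqX0 : q ∣ X 0 := hX0ofq h5
      have := (X0_dvd_of_dvd hqX0 hqnu).trans hq1
      exact not_X0_dvd_X1 this
  · -- q ∣ Gp j
    have h5 : q ∣ (2*(j:S3)+5) * X 0^(2*j+4) := by
      have h' := dvd_sub (hG.mul_left (2*((j:S3)+2) * (X 0^(j+1) * X 1))) h0
      have e : 2*((j:S3)+2) * (X 0^(j+1) * X 1) * Gp j -
          (2*((j:S3)+2) * (X 0^(j+1) * X 1) * Gp j - (2*(j:S3)+5) * X 0^(2*j+4))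
          = (2*(j:S3)+5) * X 0^(2*j+4) := by ring
      rwa [e] at h'
    have hqX0 : q ∣ X 0 := hX0ofq h5
    have hXG : (X (0:Fin 3) : S3) ∣ Gp j := (X0_dvd_of_dvd hqX0 hqnu).trans hG
    have : (X (0:Fin 3) : S3) ∣ X 1 ^ (j+1) * X 2 := by
      have h' := dvd_sub hXG (dvd_pow_self (X (0:Fin 3) : S3) (show j+2 ≠ 0 by omega))
      have e : Gp j - X 0^(j+2) = X 1 ^ (j+1) * X 2 := by rw [Gp]; ring
      rwa [e] at h'
    exact not_X0_dvd_yz j this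


def uu (j : ℕ) : Fin 3 → S3 :=
  ![2*(X 1^(j+1)*X 2) + 2*X 0^(j+2),
    -(((2*(2*j+5)*(2*j+3) : ℕ) : S3) * (X 1^(j+1)*X 2)) - ((4*j+8 : ℕ) : S3) * (X 0^(j+1)*X 1)
      + ((2*(2*j+5) : ℕ) : S3) * X 0^(j+2),
    (((2*j+5)*(2*j+3)*(2*j+3) : ℕ) : S3) * (X 1^j * X 2^2)
      + (((4*j+8)*(j+1) : ℕ) : S3) * (X 0^(j+1)*X 2)]

def vv (j : ℕ) : Fin 3 → S3 :=
  ![0, -2 * X 1^(j+2), ((2*j+3 : ℕ) : S3) * (X 1^(j+1)*X 2) + X 0^(j+2)]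

lemma hcr0 (j : ℕ) : uu j 1 * vv j 2 - uu j 2 * vv j 1 = (-2) * pderiv 0 (fp j) := by
  rw [pd0]
  simp only [uu, vv, Gp, Matrix.cons_val_zero, Matrix.cons_val_one, Matrix.head_cons,
    Matrix.cons_val_two, Matrix.tail_cons]
  push_cast
  ring

lemma hcr1 (j : ℕ) : uu j 2 * vv j 0 - uu j 0 * vv j 2 = (-2) * pderiv 1 (fp j) := by
  rw [pd1]
  simp only [uu, vv, Gp, Matrix.cons_val_zero, Matrix.cons_val_one, Matrix.head_cons,
    Matrix.cons_val_two, Matrix.tail_cons]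
  push_cast
  ring

lemma hcr2 (j : ℕ) : uu j 0 * vv j 1 - uu j 1 * vv j 0 = (-2) * pderiv 2 (fp j) := by
  rw [pd2]
  simp only [uu, vv, Gp, Matrix.cons_val_zero, Matrix.cons_val_one, Matrix.head_cons,
    Matrix.cons_val_two, Matrix.tail_cons]
  push_cast
  ring

lemma uu_mem (j : ℕ) : uu j ∈ AR (fp j) := by
  rw [AR, LinearMap.mem_ker]
  have : (relMap (fp j)) (uu j) = ∑ i, uu j i * pderiv i (fp j) := rfl
  rw [this, Fin.sum_univ_three, pd0, pd1, pd2]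
  simp only [uu, Gp, Matrix.cons_val_zero, Matrix.cons_val_one, Matrix.head_cons,
    Matrix.cons_val_two, Matrix.tail_cons]
  push_cast
  ring

lemma vv_mem (j : ℕ) : vv j ∈ AR (fp j) := by
  rw [AR, LinearMap.mem_ker]
  have : (relMap (fp j)) (vv j) = ∑ i, vv j i * pderiv i (fp j) := rfl
  rw [this, Fin.sum_univ_three, pd0, pd1, pd2]
  simp only [vv, Gp, Matrix.cons_val_zero, Matrix.cons_val_one, Matrix.head_cons,
    Matrix.cons_val_two, Matrix.tail_cons]
  push_cast
  ring

lemma hom2 : ((2:S3)).IsHomogeneous 0 := by simpa using homog0_natCast 2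

lemma homneg2 : ((-2:S3)).IsHomogeneous 0 := by simpa using (homog0_natCast 2).neg

lemma mainFree (j : ℕ) : IsFreeDivisorWith (fp j) (j+2) (j+2) := by
  classical
  have he : IsUnit (-2 : S3) := unit_neg_two
  have he0 : (-2 : S3) ≠ 0 := he.ne_zero
  set U : AR (fp j) := ⟨uu j, uu_mem j⟩ with hU
  set V : AR (fp j) := ⟨vv j, vv_mem j⟩ with hV
  have hv1ne : vv j 1 ≠ 0 := by
    simp only [vv, Matrix.cons_val_one, Matrix.head_cons]
    exact mul_ne_zero (by norm_num) (pow_ne_zero _ (X_ne_zero 1))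
  have hli : LinearIndependent S3 ![U, V] := by
    rw [LinearIndependent.pair_iff]
    intro s t hst
    have hc := congrArg Subtype.val hst
    have c0 : s * uu j 0 + t * vv j 0 = 0 := congrFun hc 0
    have c1 : s * uu j 1 + t * vv j 1 = 0 := congrFun hc 1
    have hs : s * ((-2) * pderiv 2 (fp j)) = 0 := by
      linear_combination (vv j 1) * c0 - (vv j 0) * c1 - s * hcr2 j
    have hs0 : s = 0 := by
      rcases mul_eq_zero.mp hs with h | h
      · exact h
      · exact absurd h (mul_ne_zero he0 (F2_ne j))
    refine ⟨hs0, ?_⟩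
    rw [hs0, zero_mul, zero_add] at c1
    rcases mul_eq_zero.mp c1 with h | h
    · exact h
    · exact absurd h hv1ne
  have hsp : ⊤ ≤ Submodule.span S3 (Set.range ![U, V]) := by
    rintro ⟨ρ, hρ⟩ -
    rw [Submodule.mem_span_range_iff_exists_fun]
    have hrel : ρ 0 * pderiv 0 (fp j) + ρ 1 * pderiv 1 (fp j) + ρ 2 * pderiv 2 (fp j) = 0 := by
      have h' : (relMap (fp j)) ρ = 0 := LinearMap.mem_ker.mp hρ
      have : (relMap (fp j)) ρ = ∑ i, ρ i * pderiv i (fp j) := rfl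
      rw [this, Fin.sum_univ_three] at h'
      exact h'
    obtain ⟨α, β, h0, h1, h2⟩ := keySpan (pderiv 0 (fp j)) (pderiv 1 (fp j)) (pderiv 2 (fp j))
      (uu j 0) (uu j 1) (uu j 2) (vv j 0) (vv j 1) (vv j 2) (ρ 0) (ρ 1) (ρ 2) (-2)
      he (F0_ne j) (F1_ne j) (F2_ne j) (hcop j) (hcr0 j) (hcr1 j) (hcr2 j) hrel
    refine ⟨![α, β], ?_⟩
    rw [Fin.sum_univ_two]
    apply Subtype.ext
    funext i
    have : ((![α, β] 0 • ![U,V] 0 + ![α, β] 1 • ![U,V] 1 : AR (fp j)) : Fin 3 → S3) i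
        = α * uu j i + β * vv j i := by
      simp [hU, hV, Matrix.cons_val_zero, Matrix.cons_val_one, Matrix.head_cons]
    rw [this]
    fin_cases i
    · exact h0.symm
    · exact h1.symm
    · exact h2.symm
  refine ⟨Module.Basis.mk hli hsp, ?_, ?_⟩
  · rw [Module.Basis.mk_apply]
    intro i
    fin_cases i <;>
      simp only [hU, uu, Matrix.cons_val_zero, Matrix.cons_val_one, Matrix.head_cons,
        Matrix.cons_val_two, Matrix.tail_cons]
    · exact (homCast (hom2.mul ((homX 1 (j+1)).mul (isHomogeneous_X ℂ 2))) (by omega)).add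
        (homCast (hom2.mul (homX 0 (j+2))) (by omega))
    · exact ((homCast ((homog0_natCast _).mul ((homX 1 (j+1)).mul (isHomogeneous_X ℂ 2)))
          (by omega)).neg.sub
        (homCast ((homog0_natCast _).mul ((homX 0 (j+1)).mul (isHomogeneous_X ℂ 1))) (by omega))).add
        (homCast ((homog0_natCast _).mul (homX 0 (j+2))) (by omega))
    · exact (homCast ((homog0_natCast _).mul ((homX 1 j).mul (homX 2 2))) (by omega)).add
        (homCast ((homog0_natCast _).mul ((homX 0 (j+1)).mul (isHomogeneous_X ℂ 2))) (by omega))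
  · rw [Module.Basis.mk_apply]
    intro i
    fin_cases i <;>
      simp only [hV, vv, Matrix.cons_val_zero, Matrix.cons_val_one, Matrix.head_cons,
        Matrix.cons_val_two, Matrix.tail_cons]
    · exact isHomogeneous_zero _ _ _
    · exact homCast (homneg2.mul (homX 1 (j+2))) (by omega)
    · exact (homCast ((homog0_natCast _).mul ((homX 1 (j+1)).mul (isHomogeneous_X ℂ 2))) (by omega)).add
        (homX 0 (j+2))

lemma Gp_hom (j : ℕ) : (Gp j).IsHomogeneous (j+2) := by
  rw [Gp]
  exact (homCast ((homX 1 (j+1)).mul (isHomogeneous_X ℂ 2)) (by omega)).add (homX 0 (j+2))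

lemma fp_hom (j : ℕ) : (fp j).IsHomogeneous (2*j+5) := by
  rw [fp]
  exact (homCast (((Gp_hom j).pow 2).mul (isHomogeneous_X ℂ 1)) (by omega)).sub (homX 0 (2*j+5))


theorem stmt14 (k : ℕ) (hk : 2 ≤ k) :
    ((X 1 ^ (k - 1) * X 2 + X 0 ^ k) ^ 2 * X 1 - X 0 ^ (2 * k + 1) : S3).IsHomogeneous
        (2 * k + 1) ∧
    IsFreeDivisorWith ((X 1 ^ (k - 1) * X 2 + X 0 ^ k) ^ 2 * X 1 - X 0 ^ (2 * k + 1) : S3)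
        k k := by
  obtain ⟨j, rfl⟩ : ∃ j, k = j + 2 := ⟨k - 2, by omega⟩
  have e1 : j + 2 - 1 = j + 1 := by omega
  have e2 : 2*(j+2)+1 = 2*j+5 := by omega
  rw [e1, e2]
  have hfp : ((X 1 ^ (j+1) * X 2 + X 0 ^ (j+2)) ^ 2 * X 1 - X 0 ^ (2*j+5) : S3) = fp j := by
    rw [fp, Gp]
  rw [hfp]
  exact ⟨fp_hom j, mainFree j⟩


end
end
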